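/- Let C be an abelian category and D(C) its derived category. Let S : D(C) → D(C) be a triangulated autoequivalence, i.e., an equivalence of categories whose underlying functor commutes with the shift functor and preserves distinguished triangles. Let X₁ and X₂ be objects of D(C) that are isomorphic to bounded complexes (complexes Y of objects of C with Y^n = 0 for all n outside some finite interval). Suppose there are natural numbers m₁, m₂ and integers n₁, n₂ such that S^{m₁}(X₁) ≅ X₁[n₁], S^{m₂}(X₂) ≅ X₂[n₂], and m₁·n₂ − m₂·n₁ ≠ 0. Then Hom_{D(C)}(X₁, X₂) = 0 and Hom_{D(C)}(X₂, X₁) = 0. -/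

import Mathlib

open CategoryTheory Limits

noncomputable instance stmt12HasDerivedCategory (C : Type u) [Category.{v} C] [Abelian C] :
    HasDerivedCategory C :=
  HasDerivedCategory.standard C

/-- Iterated composition of an endofunctor. -/
def functorIter {C : Type u} [Category.{v} C] (F : C ⥤ C) : ℕ → (C ⥤ C)
  | 0 => 𝟭 C
  | n + 1 => functorIter F n ⋙ F

section FCYAux

open ZeroObject

universe w


noncomputable section FCYTrunc

namespace FCYTrunc

variable {C : Type u} [Category.{v} C] [Abelian C] (Z : CochainComplex C ℤ) (n : ℤ)

/-- degreewise objects of the canonical truncation `τ_{≤ n} Z`. -/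
def obj (i : ℤ) : C :=
  if i < n then Z.X i else if i = n then kernel (Z.d n (n + 1)) else 0

lemma isZero_obj {i : ℤ} (h : n < i) : IsZero (obj Z n i) := by
  rw [obj, if_neg (by omega), if_neg (by omega)]
  exact isZero_zero C

def objIsoLt {i : ℤ} (h : i < n) : obj Z n i ≅ Z.X i :=
  eqToIso (by rw [obj, if_pos h])

def objIsoEq : obj Z n n ≅ kernel (Z.d n (n + 1)) :=
  eqToIso (by rw [obj, if_neg (lt_irrefl n), if_pos rfl])

/-- the components of the inclusion `τ_{≤ n} Z ⟶ Z`. -/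
def ι (i : ℤ) : obj Z n i ⟶ Z.X i :=
  if h : i < n then (objIsoLt Z n h).hom
  else if h' : i = n then
    eqToHom (congrArg (obj Z n) h') ≫ (objIsoEq Z n).hom ≫ kernel.ι _ ≫
      eqToHom (congrArg Z.X h'.symm)
  else 0

lemma ι_lt {i : ℤ} (h : i < n) : ι Z n i = (objIsoLt Z n h).hom := dif_pos h

lemma ι_n : ι Z n n = (objIsoEq Z n).hom ≫ kernel.ι _ := by
  rw [ι, dif_neg (lt_irrefl n), dif_pos rfl]
  simp

lemma ι_gt {i : ℤ} (h : n < i) : ι Z n i = 0 := by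
  rw [ι, dif_neg (by omega), dif_neg (by omega)]

lemma isIso_ι {i : ℤ} (h : i < n) : IsIso (ι Z n i) := by
  rw [ι_lt Z n h]; infer_instance

lemma mono_ι {i : ℤ} (h : i ≤ n) : Mono (ι Z n i) := by
  rcases h.lt_or_eq with h | h
  · rw [ι_lt Z n h]; infer_instance
  · subst h; rw [ι_n]; infer_instance

lemma ι_d {i j : ℤ} (hj : n < j) : ι Z n i ≫ Z.d i j = 0 := by
  by_cases hij : (ComplexShape.up ℤ).Rel i j
  · simp only [ComplexShape.up_Rel] at hij
    rcases lt_trichotomy i n with h | h | h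
    · omega
    · subst h
      obtain rfl : j = i + 1 := hij.symm
      rw [ι_n, Category.assoc, kernel.condition, comp_zero]
    · rw [ι_gt Z n h, zero_comp]
  · rw [Z.shape i j hij, comp_zero]

/-- the differentials of the truncation. -/
def d (i j : ℤ) : obj Z n i ⟶ obj Z n j :=
  if h : j < n then ι Z n i ≫ Z.d i j ≫ (objIsoLt Z n h).inv
  else if h' : j = n then
    kernel.lift (Z.d n (n + 1)) (ι Z n i ≫ Z.d i j ≫ eqToHom (congrArg Z.X h'))
      (by subst h'; simp [Z.d_comp_d]) ≫
      (objIsoEq Z n).inv ≫ eqToHom (congrArg (obj Z n) h'.symm)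
  else 0

lemma d_ι (i j : ℤ) : d Z n i j ≫ ι Z n j = ι Z n i ≫ Z.d i j := by
  rcases lt_trichotomy j n with h | h | h
  · rw [d, dif_pos h, ι_lt Z n h]
    simp
  · subst h
    rw [d, dif_neg (lt_irrefl j), dif_pos rfl, ι_n]
    simp
  · rw [d, dif_neg (by omega), dif_neg (by omega), zero_comp, ι_d Z n h]

lemma shape' (i j : ℤ) (hij : ¬ (ComplexShape.up ℤ).Rel i j) : d Z n i j = 0 := by
  rcases le_or_gt j n with h | h
  · have := mono_ι Z n h
    rw [← cancel_mono (ι Z n j), d_ι, Z.shape i j hij, comp_zero, zero_comp]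
  · exact (isZero_obj Z n h).eq_of_tgt _ _

/-- the canonical truncation `τ_{≤ n} Z`. -/
def T : CochainComplex C ℤ where
  X := obj Z n
  d := d Z n
  shape := shape' Z n
  d_comp_d' i j k _ _ := by
    rcases le_or_gt k n with h | h
    · have := mono_ι Z n h
      rw [← cancel_mono (ι Z n k), Category.assoc, d_ι, ← Category.assoc, d_ι,
        Category.assoc, Z.d_comp_d, comp_zero, zero_comp]
    · exact (isZero_obj Z n h).eq_of_tgt _ _

/-- the inclusion `τ_{≤ n} Z ⟶ Z`. -/
def ιT : T Z n ⟶ Z where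
  f := ι Z n
  comm' i j _ := (d_ι Z n i j).symm

lemma isZero_T_X {i : ℤ} (h : n < i) : IsZero ((T Z n).X i) := isZero_obj Z n h

lemma exactAt_T {i : ℤ} (h : n < i) : (T Z n).ExactAt i := by
  rw [HomologicalComplex.exactAt_iff]
  exact ShortComplex.exact_of_isZero_X₂ _ (isZero_obj Z n h)


section
variable {C : Type u} [Category.{v} C] [Abelian C] (Z : CochainComplex C ℤ) (n : ℤ)

lemma quasiIsoAt_ιT_lt {i : ℤ} (h : i < n) : QuasiIsoAt (ιT Z n) i := by
  rw [quasiIsoAt_iff' _ (i - 1) i (i + 1) (by simp [CochainComplex.prev])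
    (by simp [CochainComplex.next])]
  have e1 : IsIso (((HomologicalComplex.shortComplexFunctor' C _ (i - 1) i (i + 1)).map
      (ιT Z n)).τ₁) := isIso_ι Z n (by omega)
  have e2 : IsIso (((HomologicalComplex.shortComplexFunctor' C _ (i - 1) i (i + 1)).map
      (ιT Z n)).τ₂) := isIso_ι Z n h
  have e3 : Mono (((HomologicalComplex.shortComplexFunctor' C _ (i - 1) i (i + 1)).map
      (ιT Z n)).τ₃) := mono_ι Z n (by omega)
  apply ShortComplex.quasiIso_of_epi_of_isIso_of_mono

lemma quasiIsoAt_ιT_gt {i : ℤ} (h : n < i) (hZ : Z.ExactAt i) : QuasiIsoAt (ιT Z n) i := by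
  rw [quasiIsoAt_iff_exactAt (ιT Z n) i (exactAt_T Z n h)]
  exact hZ

lemma quasiIsoAt_ιT_eq : QuasiIsoAt (ιT Z n) n := by
  rw [quasiIsoAt_iff' _ (n - 1) n (n + 1) (by simp [CochainComplex.prev])
    (by simp [CochainComplex.next])]
  set φ := (HomologicalComplex.shortComplexFunctor' C _ (n - 1) n (n + 1)).map (ιT Z n) with hφ
  have hg1 : ((T Z n).sc' (n - 1) n (n + 1)).g = 0 := by
    show d Z n n (n + 1) = 0
    rw [d, dif_neg (by omega), dif_neg (by omega)]
  let h₁ : ((T Z n).sc' (n - 1) n (n + 1)).LeftHomologyData :=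
    ShortComplex.LeftHomologyData.ofHasCokernel _ hg1
  let h₂ : (Z.sc' (n - 1) n (n + 1)).LeftHomologyData :=
    ShortComplex.LeftHomologyData.ofHasKernelOfHasCokernel _
  have hτ₁ : φ.τ₁ = ι Z n (n - 1) := rfl
  have hτ₂ : φ.τ₂ = ι Z n n := rfl
  have hS₁f : ((T Z n).sc' (n - 1) n (n + 1)).f = d Z n (n - 1) n := rfl
  have hS₂f : (Z.sc' (n - 1) n (n + 1)).f = Z.d (n - 1) n := rfl
  have hS₂g : (Z.sc' (n - 1) n (n + 1)).g = Z.d n (n + 1) := rfl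
  have wcomm : ((T Z n).sc' (n - 1) n (n + 1)).f ≫ (objIsoEq Z n).hom =
      ι Z n (n - 1) ≫ kernel.lift (Z.sc' (n - 1) n (n + 1)).g (Z.sc' (n - 1) n (n + 1)).f
        (Z.sc' (n - 1) n (n + 1)).zero := by
    refine (cancel_mono (kernel.ι (Z.sc' (n - 1) n (n + 1)).g)).1 ?_
    show (d Z n (n - 1) n ≫ (objIsoEq Z n).hom) ≫ kernel.ι _ = (ι Z n (n - 1) ≫ kernel.lift (Z.d n (n + 1)) (Z.d (n - 1) n) (Z.d_comp_d _ _ _)) ≫ kernel.ι _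
    rw [Category.assoc, Category.assoc, kernel.lift_ι]
    show d Z n (n - 1) n ≫ (objIsoEq Z n).hom ≫ kernel.ι _ = ι Z n (n - 1) ≫ Z.d (n - 1) n
    rw [← ι_n, d_ι]
  let γ : ShortComplex.LeftHomologyMapData φ h₁ h₂ :=
    { φK := (objIsoEq Z n).hom
      φH := cokernel.map _ _ (ι Z n (n - 1)) (objIsoEq Z n).hom wcomm
      commi := by
        show (objIsoEq Z n).hom ≫ kernel.ι _ = 𝟙 _ ≫ φ.τ₂
        rw [hτ₂, ι_n]; exact (Category.id_comp _).symm
      commf' := by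
        have hf₁' : h₁.f' = d Z n (n - 1) n :=
          ShortComplex.LeftHomologyData.ofIsColimitCokernelCofork_f' _ hg1 _ _
        have hf₂' : h₂.f' ≫ h₂.i = Z.d (n - 1) n := h₂.f'_i
        refine (cancel_mono h₂.i).1 ?_; simp only [Category.assoc]; rw [hf₂', hf₁', hτ₁]
        have hh : (objIsoEq Z n).hom ≫ h₂.i = ι Z n n := (ι_n Z n).symm
        have h3 := d_ι Z n (n - 1) n; rw [← hh] at h3; exact (Category.assoc _ _ _).trans h3
      commπ := by
        show cokernel.π _ ≫ cokernel.map _ _ _ _ wcomm = (objIsoEq Z n).hom ≫ cokernel.π _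
        simp
        rfl }
  rw [γ.quasiIso_iff]
  haveI : IsIso (ι Z n (n - 1)) := isIso_ι Z n (by omega)
  have hrfl : γ.φH = (cokernel.mapIso ((T Z n).sc' (n - 1) n (n + 1)).f
      (kernel.lift (Z.sc' (n - 1) n (n + 1)).g (Z.sc' (n - 1) n (n + 1)).f
        (Z.sc' (n - 1) n (n + 1)).zero)
      (@asIso _ _ _ _ (ι Z n (n - 1)) (isIso_ι Z n (by omega))) (objIsoEq Z n) wcomm).hom := rfl
  rw [hrfl]
  exact Iso.isIso_hom _

end

end FCYTrunc

section
variable {C : Type u} [Category.{v} C] [Abelian C]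

lemma FCYTrunc.quasiIso_ιT (Z : CochainComplex C ℤ) (n : ℤ)
    (hZ : ∀ i, n < i → Z.ExactAt i) : QuasiIso (FCYTrunc.ιT Z n) := by
  refine ⟨fun i => ?_⟩
  rcases lt_trichotomy i n with h | h | h
  · exact quasiIsoAt_ιT_lt Z n h
  · subst h; exact quasiIsoAt_ιT_eq Z i
  · exact quasiIsoAt_ιT_gt Z n h (hZ i h)

lemma FCY_exactAt_of_isZero (Y : CochainComplex C ℤ) (i : ℤ) (h : IsZero (Y.X i)) :
    Y.ExactAt i := by
  rw [HomologicalComplex.exactAt_iff]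
  exact ShortComplex.exact_of_isZero_X₂ _ h

variable [HasDerivedCategory.{w} C]

/-- Key vanishing: morphisms from a complex supported in degrees `≤ b` to a complex
supported in degrees `> b` vanish in the derived category. -/
lemma FCY_homVanish (Y₁ Y₃ : CochainComplex C ℤ) (b : ℤ)
    (h₁ : ∀ i, b < i → IsZero (Y₁.X i)) (h₃ : ∀ i, i ≤ b → IsZero (Y₃.X i))
    (φ : DerivedCategory.Q.obj Y₁ ⟶ DerivedCategory.Q.obj Y₃) : φ = 0 := by
  classical
  haveI : (HomotopyCategory.quasiIso C (ComplexShape.up ℤ)).HasRightCalculusOfFractions := by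
    rw [HomotopyCategory.quasiIso_eq_subcategoryAcyclic_W]
    infer_instance
  let e := DerivedCategory.quotientCompQhIso C
  let quot := HomotopyCategory.quotient C (ComplexShape.up ℤ)
  -- transfer φ to a morphism between Qh-objects
  let φh : DerivedCategory.Qh.obj (quot.obj Y₁) ⟶ DerivedCategory.Qh.obj (quot.obj Y₃) :=
    e.hom.app Y₁ ≫ φ ≫ e.inv.app Y₃
  have hφ : φ = e.inv.app Y₁ ≫ φh ≫ e.hom.app Y₃ := by simp [φh]
  suffices hz : φh = 0 by rw [hφ, hz, zero_comp, comp_zero]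
  obtain ⟨ζ, hζ⟩ := Localization.exists_rightFraction DerivedCategory.Qh
    (HomotopyCategory.quasiIso C (ComplexShape.up ℤ)) φh
  rw [hζ]
  suffices hf : DerivedCategory.Qh.map ζ.f = 0 by
    rw [MorphismProperty.RightFraction.map, hf, comp_zero]
  -- lift the data to cochain complexes
  obtain ⟨f₀, hf₀⟩ := quot.map_surjective ζ.f
  obtain ⟨s₀, hs₀⟩ := quot.map_surjective ζ.s
  have hs₀' : HomologicalComplex.quasiIso C (ComplexShape.up ℤ) s₀ := by
    rw [← HomotopyCategory.quotient_map_mem_quasiIso_iff, hs₀]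
    exact ζ.hs
  rw [HomologicalComplex.mem_quasiIso_iff] at hs₀'
  -- the source of the fraction is exact in degrees > b
  have hexact : ∀ i, b < i → (ζ.X'.as).ExactAt i := by
    intro i hi
    have := hs₀'.quasiIsoAt i
    rw [quasiIsoAt_iff_exactAt' s₀ i (FCY_exactAt_of_isZero Y₁ i (h₁ i hi))] at this
    exact this
  -- truncate
  haveI : QuasiIso (FCYTrunc.ιT ζ.X'.as b) := FCYTrunc.quasiIso_ιT _ b hexact
  have hcomp : FCYTrunc.ιT ζ.X'.as b ≫ f₀ = 0 := by
    ext i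
    rcases le_or_gt i b with h | h
    · exact (h₃ i h).eq_of_tgt _ _
    · apply (FCYTrunc.isZero_T_X ζ.X'.as b h).eq_of_src
  have hQ : DerivedCategory.Q.map (FCYTrunc.ιT ζ.X'.as b) ≫ DerivedCategory.Q.map f₀ = 0 := by
    rw [← Functor.map_comp, hcomp, Functor.map_zero]
  haveI : IsIso (DerivedCategory.Q.map (FCYTrunc.ιT ζ.X'.as b)) := inferInstance
  have hQf₀ : DerivedCategory.Q.map f₀ = 0 := by
    rw [← cancel_epi (DerivedCategory.Q.map (FCYTrunc.ιT ζ.X'.as b)), hQ, comp_zero]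
  -- conclude for Qh
  have : DerivedCategory.Qh.map (quot.map f₀) =
      e.hom.app ζ.X'.as ≫ DerivedCategory.Q.map f₀ ≫ e.inv.app Y₃ := by
    have h := e.hom.naturality f₀
    simp only [Functor.comp_map] at h
    rw [← Category.assoc, ← h]
    simp [quot]
  rw [← hf₀]; exact this.trans (by rw [hQf₀, zero_comp, comp_zero]; rfl)

end


section FCYIter

variable {D : Type*} [Category D]

lemma functorIter_add (F : D ⥤ D) (a b : ℕ) :
    functorIter F (a + b) = functorIter F a ⋙ functorIter F b := by
  induction b with
  | zero => exact (Functor.comp_id _).symm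
  | succ b ih =>
    show functorIter F (a + b) ⋙ F = _
    rw [ih, Functor.assoc]
    rfl

lemma functorIter_mul (F : D ⥤ D) (m k : ℕ) :
    functorIter F (m * k) = functorIter (functorIter F m) k := by
  induction k with
  | zero => rfl
  | succ k ih =>
    show functorIter F (m * k + m) = _
    rw [functorIter_add, ih]
    rfl

def functorIterCommShift (F : D ⥤ D) [HasShift D ℤ] [F.CommShift ℤ] :
    ∀ n, (functorIter F n).CommShift ℤ
  | 0 => inferInstanceAs ((𝟭 D).CommShift ℤ)
  | n + 1 => by
    haveI := functorIterCommShift F n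
    exact inferInstanceAs ((functorIter F n ⋙ F).CommShift ℤ)

def functorIterIsEquivalence (F : D ⥤ D) [F.IsEquivalence] :
    ∀ n, (functorIter F n).IsEquivalence
  | 0 => inferInstanceAs ((𝟭 D).IsEquivalence)
  | n + 1 => by
    haveI := functorIterIsEquivalence F n
    exact inferInstanceAs ((functorIter F n ⋙ F).IsEquivalence)

lemma functorIter_cy [HasShift D ℤ] (F : D ⥤ D) [F.CommShift ℤ] (X : D) (n : ℤ)
    (e : F.obj X ≅ X⟦n⟧) (k : ℕ) :
    Nonempty ((functorIter F k).obj X ≅ X⟦(k : ℤ) * n⟧) := by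
  induction k with
  | zero =>
    refine ⟨(shiftFunctorZero D ℤ).symm.app X ≪≫ eqToIso ?_⟩
    norm_num
  | succ k ih =>
    obtain ⟨g⟩ := ih
    refine ⟨F.mapIso g ≪≫ (F.commShiftIso ((k : ℤ) * n)).app X ≪≫
      (shiftFunctor D ((k : ℤ) * n)).mapIso e ≪≫
      (shiftFunctorAdd' D n ((k : ℤ) * n) (((k : ℤ) + 1) * n) (by ring)).symm.app X ≪≫
      eqToIso ?_⟩
    push_cast
    ring_nf

lemma FCY_step [HasShift D ℤ] (F : D ⥤ D) [F.IsEquivalence] [F.CommShift ℤ] (X₁ X₂ : D)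
    (u v : ℤ) (eA : F.obj X₁ ≅ X₁⟦u⟧) (eB : F.obj X₂ ≅ X₂⟦v⟧) (t : ℤ) :
    Nonempty ((X₁ ⟶ X₂⟦t⟧) ≃ (X₁ ⟶ X₂⟦t + (v - u)⟧)) := by
  have FF : F.FullyFaithful := Functor.FullyFaithful.ofFullyFaithful F
  refine ⟨(FF.homEquiv.trans
    ((Iso.homCongr eA ((F.commShiftIso t).app X₂ ≪≫ (shiftFunctor D t).mapIso eB ≪≫
      (shiftFunctorAdd' D v t (v + t) rfl).symm.app X₂)).trans
    (((shiftEquiv D u).toAdjunction.homEquiv X₁ (X₂⟦v + t⟧)).trans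
    (Iso.homCongr (Iso.refl X₁)
      ((shiftFunctorAdd' D (v + t) (-u) (t + (v - u)) (by ring)).symm.app X₂)))))⟩

end FCYIter

section FCYMain

variable {C : Type u} [Category.{v} C] [Abelian C] [HasDerivedCategory.{w} C]

theorem FCY_aux
    (S : DerivedCategory C ⥤ DerivedCategory C)
    [S.IsEquivalence] [S.CommShift ℤ]
    (X₁ X₂ : DerivedCategory C)
    (hX₁ : ∃ Y : CochainComplex C ℤ,
      (∃ a b : ℤ, ∀ n, (n < a ∨ b < n) → IsZero (Y.X n)) ∧
        Nonempty (X₁ ≅ DerivedCategory.Q.obj Y))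
    (hX₂ : ∃ Y : CochainComplex C ℤ,
      (∃ a b : ℤ, ∀ n, (n < a ∨ b < n) → IsZero (Y.X n)) ∧
        Nonempty (X₂ ≅ DerivedCategory.Q.obj Y))
    (m₁ m₂ : ℕ) (n₁ n₂ : ℤ)
    (h₁ : Nonempty ((functorIter S m₁).obj X₁ ≅ X₁⟦n₁⟧))
    (h₂ : Nonempty ((functorIter S m₂).obj X₂ ≅ X₂⟦n₂⟧))
    (hd : (m₁ : ℤ) * n₂ - (m₂ : ℤ) * n₁ ≠ 0) :
    ∀ f : X₁ ⟶ X₂, f = 0 := by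
  obtain ⟨Y₁, ⟨a₁, b₁, hY₁⟩, ⟨e₁⟩⟩ := hX₁
  obtain ⟨Y₂, ⟨a₂, b₂, hY₂⟩, ⟨e₂⟩⟩ := hX₂
  obtain ⟨eS₁⟩ := h₁
  obtain ⟨eS₂⟩ := h₂
  -- the iterated functor
  haveI := functorIterCommShift S m₁
  haveI := functorIterCommShift S m₂
  haveI := functorIterIsEquivalence S (m₁ * m₂)
  haveI := functorIterCommShift S (m₁ * m₂)
  set u : ℤ := (m₂ : ℤ) * n₁ with hu
  set v : ℤ := (m₁ : ℤ) * n₂ with hv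
  set d : ℤ := v - u with hdd
  have hd0 : d ≠ 0 := by omega
  -- Calabi-Yau isomorphisms for the iterated functor
  have eA : Nonempty ((functorIter S (m₁ * m₂)).obj X₁ ≅ X₁⟦u⟧) := by
    rw [functorIter_mul]
    exact functorIter_cy (functorIter S m₁) X₁ n₁ eS₁ m₂
  have eB : Nonempty ((functorIter S (m₁ * m₂)).obj X₂ ≅ X₂⟦v⟧) := by
    rw [Nat.mul_comm, functorIter_mul]
    exact functorIter_cy (functorIter S m₂) X₂ n₂ eS₂ m₁
  obtain ⟨eA⟩ := eA
  obtain ⟨eB⟩ := eB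
  -- the step equivalence
  have step : ∀ t : ℤ, Subsingleton (X₁ ⟶ X₂⟦t⟧) ↔ Subsingleton (X₁ ⟶ X₂⟦t + d⟧) := by
    intro t
    obtain ⟨E⟩ := FCY_step (functorIter S (m₁ * m₂)) X₁ X₂ u v eA eB t
    exact E.subsingleton_congr
  have iter : ∀ (k : ℕ) (t : ℤ),
      Subsingleton (X₁ ⟶ X₂⟦t⟧) ↔ Subsingleton (X₁ ⟶ X₂⟦t + (k : ℤ) * d⟧) := by
    intro k
    induction k with
    | zero => intro t; rw [show t + ((0 : ℕ) : ℤ) * d = t by push_cast; ring]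
    | succ k ih =>
      intro t
      rw [show t + ((k + 1 : ℕ) : ℤ) * d = (t + d) + (k : ℤ) * d by push_cast; ring]
      exact (step t).trans (ih (t + d))
  -- vanishing for very negative shifts
  set t₀ : ℤ := a₂ - b₁ - 1 with ht₀
  have vanish : ∀ t : ℤ, t ≤ t₀ → Subsingleton (X₁ ⟶ X₂⟦t⟧) := by
    intro t ht
    have Ψ : (X₁ ⟶ X₂⟦t⟧) ≃
        (DerivedCategory.Q.obj Y₁ ⟶ DerivedCategory.Q.obj ((shiftFunctor _ t).obj Y₂)) :=
      Iso.homCongr e₁ (((shiftFunctor (DerivedCategory C) t).mapIso e₂) ≪≫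
        ((DerivedCategory.Q.commShiftIso t).app Y₂).symm)
    rw [Ψ.subsingleton_congr]
    constructor
    intro f g
    have hf := FCY_homVanish Y₁ ((shiftFunctor _ t).obj Y₂) b₁
      (fun i hi => hY₁ i (Or.inr hi))
      (fun i hi => by
        refine IsZero.of_iso (hY₂ (i + t) (Or.inl (by omega)))
          (Y₂.shiftFunctorObjXIso t i (i + t) rfl)) f
    have hg := FCY_homVanish Y₁ ((shiftFunctor _ t).obj Y₂) b₁
      (fun i hi => hY₁ i (Or.inr hi))
      (fun i hi => by
        refine IsZero.of_iso (hY₂ (i + t) (Or.inl (by omega)))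
          (Y₂.shiftFunctorObjXIso t i (i + t) rfl)) g
    rw [hf, hg]
  -- conclude that Hom(X₁, X₂⟦0⟧) is a subsingleton
  have main : Subsingleton (X₁ ⟶ X₂⟦(0 : ℤ)⟧) := by
    set k : ℕ := (-t₀).toNat with hk
    have hk' : (k : ℤ) ≥ -t₀ := Int.self_le_toNat _
    rcases lt_or_gt_of_ne hd0 with hneg | hpos
    · refine (iter k 0).mpr ?_
      refine vanish _ ?_
      have : (k : ℤ) * d ≤ -(k : ℤ) := by nlinarith [Int.natCast_nonneg k]
      omega
    · have h1 : Subsingleton (X₁ ⟶ X₂⟦-((k : ℤ) * d)⟧) := by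
        refine vanish _ ?_
        have : (k : ℤ) * d ≥ (k : ℤ) := by nlinarith [Int.natCast_nonneg k]
        omega
      have h2 := (iter k (-((k : ℤ) * d))).mp h1
      rwa [show -((k : ℤ) * d) + (k : ℤ) * d = 0 by ring] at h2
  have final : Subsingleton (X₁ ⟶ X₂) :=
    ((Iso.homCongr (Iso.refl X₁)
      ((shiftFunctorZero (DerivedCategory C) ℤ).app X₂)).subsingleton_congr).mp main
  intro f
  exact Subsingleton.elim f 0

end FCYMain

end FCYTrunc

end FCYAux

/-- Let `C` be an abelian category and `S` a triangulated autoequivalence of the derived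
category `D(C)`.  If `X₁`, `X₂` are objects of `D(C)` isomorphic to bounded complexes and
there are natural numbers `m₁, m₂` and integers `n₁, n₂` with `S^{m₁} X₁ ≅ X₁[n₁]`,
`S^{m₂} X₂ ≅ X₂[n₂]` and `m₁ n₂ - m₂ n₁ ≠ 0`, then all morphisms `X₁ ⟶ X₂` and
`X₂ ⟶ X₁` vanish. -/
theorem hom_eq_zero_of_fractionally_calabi_yau
    (C : Type u) [Category.{v} C] [Abelian C]
    (S : DerivedCategory C ⥤ DerivedCategory C)
    [S.IsEquivalence] [S.CommShift ℤ] [S.IsTriangulated]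
    (X₁ X₂ : DerivedCategory C)
    (hX₁ : ∃ Y : CochainComplex C ℤ,
      (∃ a b : ℤ, ∀ n, (n < a ∨ b < n) → IsZero (Y.X n)) ∧
        Nonempty (X₁ ≅ DerivedCategory.Q.obj Y))
    (hX₂ : ∃ Y : CochainComplex C ℤ,
      (∃ a b : ℤ, ∀ n, (n < a ∨ b < n) → IsZero (Y.X n)) ∧
        Nonempty (X₂ ≅ DerivedCategory.Q.obj Y))
    (m₁ m₂ : ℕ) (n₁ n₂ : ℤ)
    (h₁ : Nonempty ((functorIter S m₁).obj X₁ ≅ X₁⟦n₁⟧))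
    (h₂ : Nonempty ((functorIter S m₂).obj X₂ ≅ X₂⟦n₂⟧))
    (hd : (m₁ : ℤ) * n₂ - (m₂ : ℤ) * n₁ ≠ 0) :
    (∀ f : X₁ ⟶ X₂, f = 0) ∧ (∀ f : X₂ ⟶ X₁, f = 0) := by
  constructor
  · exact FCY_aux S X₁ X₂ hX₁ hX₂ m₁ m₂ n₁ n₂ h₁ h₂ hd
  · exact FCY_aux S X₂ X₁ hX₂ hX₁ m₂ m₁ n₂ n₁ h₂ h₁ (by omega)
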